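/- A least-squares estimate is unchanged by deleting a data point if and only if that data point has zero residual: let X be an n × d real matrix with A = XᵀX invertible, Y ∈ ℝ^n, x ∈ ℝ^d with x ≠ 0, y ∈ ℝ, and let β̂₊ be the least-squares estimate for the data (X̃, Ỹ) obtained by appending row xᵀ to X and entry y to Y, and β̂ = A⁻¹XᵀY the estimate without that row. Then β̂ = β̂₊ if and only if y = xᵀβ̂₊. -/

import Mathlib

open Matrix

/-- A least-squares estimate is unchanged by deleting a data point if and only if that
data point has zero residual: with `A = XᵀX` invertible and `x ≠ 0`, the estimate
`β̂ = A⁻¹XᵀY` equals the estimate `β̂₊` for the data augmented by the row `(x, y)` if and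
only if `y = xᵀβ̂₊`. -/
theorem stmt_9 (n d : ℕ) (X : Matrix (Fin n) (Fin d) ℝ) (Y : Fin n → ℝ)
    (hA : IsUnit (Xᵀ * X).det) (x : Fin d → ℝ) (hx : x ≠ 0) (y : ℝ) :
    let A : Matrix (Fin d) (Fin d) ℝ := Xᵀ * X
    let Xt : Matrix (Fin (n + 1)) (Fin d) ℝ := Matrix.of (Fin.snoc (Matrix.of.symm X) x)
    let Yt : Fin (n + 1) → ℝ := Fin.snoc Y y
    let βplus : Fin d → ℝ := (Xtᵀ * Xt)⁻¹ *ᵥ (Xtᵀ *ᵥ Yt)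
    A⁻¹ *ᵥ (Xᵀ *ᵥ Y) = βplus ↔ y = x ⬝ᵥ βplus := by
  intro A Xt Yt βplus
  -- structure lemmas
  have hXt_cast : ∀ (k : Fin n) (j : Fin d), Xt k.castSucc j = X k j := by
    intro k j
    simp [Xt, Fin.snoc_castSucc]
  have hXt_last : ∀ j, Xt (Fin.last n) j = x j := by
    intro j
    simp [Xt]
  have hAt : Xtᵀ * Xt = A + vecMulVec x x := by
    ext i j
    simp only [Matrix.mul_apply, Matrix.transpose_apply, Matrix.add_apply, A,
      vecMulVec_apply, Fin.sum_univ_castSucc, hXt_cast, hXt_last]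
  have hbt : Xtᵀ *ᵥ Yt = Xᵀ *ᵥ Y + y • x := by
    ext i
    simp only [Matrix.mulVec, dotProduct, Matrix.transpose_apply, Pi.add_apply,
      Pi.smul_apply, smul_eq_mul, Fin.sum_univ_castSucc, hXt_cast, hXt_last, Yt,
      Fin.snoc_castSucc, Fin.snoc_last]
    ring
  -- invertibility of the augmented Gram matrix
  have hAt_unit : IsUnit (Xtᵀ * Xt).det := by
    by_contra h
    have hdet : (Xtᵀ * Xt).det = 0 := by
      rcases eq_or_ne (Xtᵀ * Xt).det 0 with h0 | h0
      · exact h0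
      · exact absurd (isUnit_iff_ne_zero.mpr h0) h
    obtain ⟨v, hv, hv0⟩ := (Matrix.exists_mulVec_eq_zero_iff).mpr hdet
    have hXtv : Xt *ᵥ v = 0 := by
      have h1 : v ⬝ᵥ ((Xtᵀ * Xt) *ᵥ v) = (Xt *ᵥ v) ⬝ᵥ (Xt *ᵥ v) := by
        rw [← Matrix.mulVec_mulVec, dotProduct_mulVec, vecMul_transpose]
      rw [hv0, dotProduct_zero] at h1
      exact dotProduct_self_eq_zero.mp h1.symm
    have hXv : X *ᵥ v = 0 := by
      ext k
      have := congrFun hXtv k.castSucc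
      simpa [Matrix.mulVec, dotProduct, hXt_cast] using this
    have hAv : A *ᵥ v = 0 := by
      rw [show A *ᵥ v = Xᵀ *ᵥ (X *ᵥ v) by rw [Matrix.mulVec_mulVec], hXv, Matrix.mulVec_zero]
    have : v = 0 := by
      have := congrArg (fun w => A⁻¹ *ᵥ w) hAv
      simpa [Matrix.mulVec_mulVec, Matrix.nonsing_inv_mul A hA, Matrix.mulVec_zero] using this
    exact hv this
  have hkey : (Xtᵀ * Xt) *ᵥ βplus = Xtᵀ *ᵥ Yt := by
    rw [show βplus = (Xtᵀ * Xt)⁻¹ *ᵥ (Xtᵀ *ᵥ Yt) from rfl, Matrix.mulVec_mulVec,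
      Matrix.mul_nonsing_inv _ hAt_unit, Matrix.one_mulVec]
  have hvmv : vecMulVec x x *ᵥ βplus = (x ⬝ᵥ βplus) • x := by
    ext i
    simp only [Matrix.mulVec, dotProduct, vecMulVec_apply, Pi.smul_apply, smul_eq_mul,
      Finset.sum_mul]
    exact Finset.sum_congr rfl fun j _ => by ring
  rw [hAt, hbt, Matrix.add_mulVec, hvmv] at hkey
  constructor
  · intro heq
    have hAb : A *ᵥ βplus = Xᵀ *ᵥ Y := by
      rw [← heq, Matrix.mulVec_mulVec, Matrix.mul_nonsing_inv _ hA, Matrix.one_mulVec]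
    rw [hAb] at hkey
    have : (x ⬝ᵥ βplus) • x = y • x := by
      have := hkey
      exact add_left_cancel this
    rcases eq_or_ne (x ⬝ᵥ βplus) y with h | h
    · exact h.symm
    · exfalso
      have : ((x ⬝ᵥ βplus) - y) • x = 0 := by rw [sub_smul, this, sub_self]
      rcases smul_eq_zero.mp this with h' | h'
      · exact h (sub_eq_zero.mp h')
      · exact hx h'
  · intro hy
    have hAb : A *ᵥ βplus = Xᵀ *ᵥ Y := by
      rw [← hy] at hkey
      exact add_right_cancel hkey
    rw [← hAb, Matrix.mulVec_mulVec, Matrix.nonsing_inv_mul _ hA, Matrix.one_mulVec]
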